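/- Let T = U ⊕ U ⊕ N for some even lattice N (so T contains two orthogonal copies of the hyperbolic plane). Let v, w ∈ T be primitive vectors with v² = w², with div(v) = div(w) = m, and such that v/m and w/m define the same class in the discriminant group T^∨/T. Then there exists an isometry g of T with g(v) = w. -/

import Mathlib

set_option linter.unusedSectionVars false

namespace S16

variable {N : Type} [AddCommGroup N] [Module ℤ N]

abbrev TT (N : Type) := (Fin 2 → ℤ) × (Fin 2 → ℤ) × N

def mk (a b c d : ℤ) (n : N) : TT N := (![a, b], ![c, d], n)

@[simp] lemma mk_10 (a b c d : ℤ) (n : N) : (mk a b c d n).1 0 = a := rfl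
@[simp] lemma mk_11 (a b c d : ℤ) (n : N) : (mk a b c d n).1 1 = b := rfl
@[simp] lemma mk_20 (a b c d : ℤ) (n : N) : (mk a b c d n).2.1 0 = c := rfl
@[simp] lemma mk_21 (a b c d : ℤ) (n : N) : (mk a b c d n).2.1 1 = d := rfl
@[simp] lemma mk_22 (a b c d : ℤ) (n : N) : (mk a b c d n).2.2 = n := rfl

@[simp] lemma add_10 (u v : TT N) : (u + v).1 0 = u.1 0 + v.1 0 := rfl
@[simp] lemma add_11 (u v : TT N) : (u + v).1 1 = u.1 1 + v.1 1 := rfl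
@[simp] lemma add_20 (u v : TT N) : (u + v).2.1 0 = u.2.1 0 + v.2.1 0 := rfl
@[simp] lemma add_21 (u v : TT N) : (u + v).2.1 1 = u.2.1 1 + v.2.1 1 := rfl
@[simp] lemma add_22 (u v : TT N) : (u + v).2.2 = u.2.2 + v.2.2 := rfl

@[simp] lemma sub_10 (u v : TT N) : (u - v).1 0 = u.1 0 - v.1 0 := rfl
@[simp] lemma sub_11 (u v : TT N) : (u - v).1 1 = u.1 1 - v.1 1 := rfl
@[simp] lemma sub_20 (u v : TT N) : (u - v).2.1 0 = u.2.1 0 - v.2.1 0 := rfl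
@[simp] lemma sub_21 (u v : TT N) : (u - v).2.1 1 = u.2.1 1 - v.2.1 1 := rfl
@[simp] lemma sub_22 (u v : TT N) : (u - v).2.2 = u.2.2 - v.2.2 := rfl

@[simp] lemma smul_10 (z : ℤ) (u : TT N) : (z • u).1 0 = z * u.1 0 := rfl
@[simp] lemma smul_11 (z : ℤ) (u : TT N) : (z • u).1 1 = z * u.1 1 := rfl
@[simp] lemma smul_20 (z : ℤ) (u : TT N) : (z • u).2.1 0 = z * u.2.1 0 := rfl
@[simp] lemma smul_21 (z : ℤ) (u : TT N) : (z • u).2.1 1 = z * u.2.1 1 := rfl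
@[simp] lemma smul_22 (z : ℤ) (u : TT N) : (z • u).2.2 = z • u.2.2 := rfl

lemma ext5 {u v : TT N} (h1 : u.1 0 = v.1 0) (h2 : u.1 1 = v.1 1)
    (h3 : u.2.1 0 = v.2.1 0) (h4 : u.2.1 1 = v.2.1 1) (h5 : u.2.2 = v.2.2) : u = v := by
  refine Prod.ext ?_ (Prod.ext ?_ h5)
  · funext i; fin_cases i
    · exact h1
    · exact h2
  · funext i; fin_cases i
    · exact h3
    · exact h4

lemma eta (u : TT N) : u = mk (u.1 0) (u.1 1) (u.2.1 0) (u.2.1 1) u.2.2 :=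
  ext5 rfl rfl rfl rfl rfl

variable (BN : N →ₗ[ℤ] N →ₗ[ℤ] ℤ)

def Bl : TT N →ₗ[ℤ] TT N →ₗ[ℤ] ℤ :=
  LinearMap.mk₂ ℤ
    (fun p q => p.1 0 * q.1 1 + p.1 1 * q.1 0 +
      p.2.1 0 * q.2.1 1 + p.2.1 1 * q.2.1 0 + BN p.2.2 q.2.2)
    (by intro p p' q; simp [map_add, LinearMap.add_apply]; ring)
    (by intro z p q; simp [map_smul, LinearMap.smul_apply, smul_eq_mul]; ring)
    (by intro p q q'; simp [map_add]; ring)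
    (by intro z p q; simp [map_smul, smul_eq_mul]; ring)

lemma Bl_apply (p q : TT N) : Bl BN p q = p.1 0 * q.1 1 + p.1 1 * q.1 0 +
    p.2.1 0 * q.2.1 1 + p.2.1 1 * q.2.1 0 + BN p.2.2 q.2.2 := rfl

@[simp] lemma Bl_mk (a b c d a' b' c' d' : ℤ) (n n' : N) :
    Bl BN (mk a b c d n) (mk a' b' c' d' n') =
      a * b' + b * a' + c * d' + d * c' + BN n n' := rfl

lemma Bl_symm (hsymm : ∀ x y : N, BN x y = BN y x) (p q : TT N) :
    Bl BN p q = Bl BN q p := by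
  rw [Bl_apply, Bl_apply, hsymm p.2.2 q.2.2]; ring

@[simp] lemma Bl_pF1 (u : TT N) : Bl BN u (mk 0 1 0 0 0) = u.1 0 := by
  rw [Bl_apply]; simp

@[simp] lemma Bl_pE1 (u : TT N) : Bl BN u (mk 1 0 0 0 0) = u.1 1 := by
  rw [Bl_apply]; simp

@[simp] lemma Bl_pF2 (u : TT N) : Bl BN u (mk 0 0 0 1 0) = u.2.1 0 := by
  rw [Bl_apply]; simp

@[simp] lemma Bl_pE2 (u : TT N) : Bl BN u (mk 0 0 1 0 0) = u.2.1 1 := by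
  rw [Bl_apply]; simp

/-- The Eichler transvection as a linear map. -/
def tvF (e a : TT N) (k : ℤ) : TT N →ₗ[ℤ] TT N :=
  LinearMap.id + (Bl BN e).smulRight a - ((Bl BN a + k • (Bl BN e)).smulRight e)

lemma tvF_apply (e a : TT N) (k : ℤ) (x : TT N) :
    tvF BN e a k x = x + (Bl BN e x) • a - (Bl BN a x + k * Bl BN e x) • e := by
  simp [tvF, LinearMap.smulRight_apply, LinearMap.add_apply, LinearMap.sub_apply,
    LinearMap.smul_apply, smul_eq_mul]

lemma tvF_comp (e a : TT N) (k : ℤ) (he : Bl BN e e = 0) (hea : Bl BN e a = 0)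
    (hae : Bl BN a e = 0) (hk : Bl BN a a = 2 * k) (x : TT N) :
    tvF BN e a k (tvF BN e (-a) k x) = x := by
  simp only [tvF_apply, map_add, map_sub, map_smul, map_neg, LinearMap.add_apply,
    LinearMap.sub_apply, LinearMap.smul_apply, LinearMap.neg_apply, smul_eq_mul,
    he, hea, hae, hk]
  module

/-- The Eichler transvection as a linear equivalence. -/
def tvE (e a : TT N) (k : ℤ) (he : Bl BN e e = 0) (hea : Bl BN e a = 0)
    (hae : Bl BN a e = 0) (hk : Bl BN a a = 2 * k) : TT N ≃ₗ[ℤ] TT N :=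
  LinearEquiv.ofLinear (tvF BN e a k) (tvF BN e (-a) k)
    (LinearMap.ext fun x => tvF_comp BN e a k he hea hae hk x)
    (LinearMap.ext fun x => by
      have h := tvF_comp BN e (-a) k he (by simpa using hea) (by simpa using hae)
        (by simpa using hk) x
      rwa [neg_neg] at h)

lemma tvE_apply (e a : TT N) (k : ℤ) (he) (hea) (hae) (hk) (x : TT N) :
    tvE BN e a k he hea hae hk x = x + (Bl BN e x) • a - (Bl BN a x + k * Bl BN e x) • e :=
  tvF_apply BN e a k x

lemma tv_isom (hsymm : ∀ x y : N, BN x y = BN y x) (e a : TT N) (k : ℤ)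
    (he : Bl BN e e = 0) (hea : Bl BN e a = 0) (hae : Bl BN a e = 0)
    (hk : Bl BN a a = 2 * k) (x y : TT N) :
    Bl BN (tvF BN e a k x) (tvF BN e a k y) = Bl BN x y := by
  have h1 : Bl BN x a = Bl BN a x := Bl_symm BN hsymm x a
  have h2 : Bl BN x e = Bl BN e x := Bl_symm BN hsymm x e
  simp only [tvF_apply, map_add, map_sub, map_smul, LinearMap.add_apply,
    LinearMap.sub_apply, LinearMap.smul_apply, smul_eq_mul, he, hea, hae, hk]
  rw [h1, h2]; ring

/-- Reachability by an isometry that moves `u` by an element of `mT`. -/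
def Good (m : ℤ) (u u' : TT N) : Prop :=
  (∃ g : TT N ≃ₗ[ℤ] TT N, (∀ x y, Bl BN (g x) (g y) = Bl BN x y) ∧ g u = u') ∧
    ∃ t, u' - u = m • t

lemma Good.refl' (m : ℤ) (u : TT N) : Good BN m u u :=
  ⟨⟨LinearEquiv.refl ℤ _, fun _ _ => rfl, rfl⟩, ⟨0, by simp [zsmul_zero]⟩⟩

lemma Good.trans' {m : ℤ} {u u' u'' : TT N} (h : Good BN m u u') (h' : Good BN m u' u'') :
    Good BN m u u'' := by
  obtain ⟨⟨g, hg, hgu⟩, t, ht⟩ := h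
  obtain ⟨⟨g', hg', hgu'⟩, t', ht'⟩ := h'
  refine ⟨⟨g.trans g', fun x y => ?_, ?_⟩, ⟨t + t', ?_⟩⟩
  · simp only [LinearEquiv.trans_apply, hg', hg]
  · simp [LinearEquiv.trans_apply, hgu, hgu']
  · rw [show u'' - u = (u'' - u') + (u' - u) by abel, ht, ht']; module

lemma Good.symm' {m : ℤ} {u u' : TT N} (h : Good BN m u u') : Good BN m u' u := by
  obtain ⟨⟨g, hg, hgu⟩, t, ht⟩ := h
  refine ⟨⟨g.symm, fun x y => ?_, ?_⟩, ⟨-t, ?_⟩⟩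
  · have := hg (g.symm x) (g.symm y)
    rw [g.apply_symm_apply, g.apply_symm_apply] at this
    exact this.symm
  · rw [← hgu, g.symm_apply_apply]
  · rw [show u - u' = -(u' - u) by abel, ht]; module

lemma Good.congr' {m : ℤ} {u u' u'' : TT N} (h : Good BN m u u') (e : u' = u'') :
    Good BN m u u'' := e ▸ h

lemma Good.hdvd {m : ℤ} {u u' : TT N} (h : Good BN m u u')
    (hd : ∀ x, m ∣ Bl BN u x) : ∀ x, m ∣ Bl BN u' x := by
  obtain ⟨⟨g, hg, hgu⟩, _⟩ := h
  intro x
  have := hg u (g.symm x)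
  rw [g.apply_symm_apply, hgu] at this
  rw [this]; exact hd _

lemma Good.witness {m : ℤ} {u u' : TT N} (h : Good BN m u u')
    (hw : ∃ x, Bl BN u x = m) : ∃ x, Bl BN u' x = m := by
  obtain ⟨⟨g, hg, hgu⟩, _⟩ := h
  obtain ⟨x, hx⟩ := hw
  exact ⟨g x, by rw [← hgu, hg, hx]⟩

lemma Good.sq {m : ℤ} {u u' : TT N} (h : Good BN m u u') :
    Bl BN u' u' = Bl BN u u := by
  obtain ⟨⟨g, hg, hgu⟩, _⟩ := h
  rw [← hgu, hg]

lemma good_tv (m : ℤ) (e a u : TT N) (k : ℤ)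
    (hsymm : ∀ x y : N, BN x y = BN y x)
    (he : Bl BN e e = 0) (hea : Bl BN e a = 0) (hae : Bl BN a e = 0)
    (hk : Bl BN a a = 2 * k)
    (h1 : m ∣ Bl BN u e) (h2 : m ∣ Bl BN u a) :
    Good BN m u (u + (Bl BN e u) • a - (Bl BN a u + k * Bl BN e u) • e) := by
  have h1' : m ∣ Bl BN e u := by rwa [← Bl_symm BN hsymm u e]
  have h2' : m ∣ Bl BN a u := by rwa [← Bl_symm BN hsymm u a]
  refine ⟨⟨tvE BN e a k he hea hae hk, tv_isom BN hsymm e a k he hea hae hk,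
    tvE_apply BN e a k he hea hae hk u⟩, ?_⟩
  obtain ⟨s, hs⟩ := h1'
  obtain ⟨p, hp⟩ := h2'
  refine ⟨s • a - (p + k * s) • e, ?_⟩
  rw [hs, hp]
  module

/-! ### Swap isometries -/

def swapA : TT N ≃ₗ[ℤ] TT N where
  toFun x := (![x.2.1 1, x.2.1 0], ![x.1 1, x.1 0], x.2.2)
  map_add' x y := by refine ext5 ?_ ?_ ?_ ?_ ?_ <;> simp
  map_smul' z x := by refine ext5 ?_ ?_ ?_ ?_ ?_ <;> simp
  invFun x := (![x.2.1 1, x.2.1 0], ![x.1 1, x.1 0], x.2.2)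
  left_inv x := by refine ext5 ?_ ?_ ?_ ?_ ?_ <;> simp
  right_inv x := by refine ext5 ?_ ?_ ?_ ?_ ?_ <;> simp

def swap2 : TT N ≃ₗ[ℤ] TT N where
  toFun x := (x.1, ![x.2.1 1, x.2.1 0], x.2.2)
  map_add' x y := by refine ext5 ?_ ?_ ?_ ?_ ?_ <;> simp
  map_smul' z x := by refine ext5 ?_ ?_ ?_ ?_ ?_ <;> simp
  invFun x := (x.1, ![x.2.1 1, x.2.1 0], x.2.2)
  left_inv x := by refine ext5 ?_ ?_ ?_ ?_ ?_ <;> simp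
  right_inv x := by refine ext5 ?_ ?_ ?_ ?_ ?_ <;> simp

def swapP : TT N ≃ₗ[ℤ] TT N where
  toFun x := (x.2.1, x.1, x.2.2)
  map_add' x y := by refine ext5 ?_ ?_ ?_ ?_ ?_ <;> simp
  map_smul' z x := by refine ext5 ?_ ?_ ?_ ?_ ?_ <;> simp
  invFun x := (x.2.1, x.1, x.2.2)
  left_inv x := by refine ext5 ?_ ?_ ?_ ?_ ?_ <;> simp
  right_inv x := by refine ext5 ?_ ?_ ?_ ?_ ?_ <;> simp

section Moves

variable (m : ℤ)

lemma dvd_coords {u : TT N} (hdvd : ∀ x, m ∣ Bl BN u x) :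
    m ∣ u.1 0 ∧ m ∣ u.1 1 ∧ m ∣ u.2.1 0 ∧ m ∣ u.2.1 1 := by
  refine ⟨?_, ?_, ?_, ?_⟩
  · simpa using hdvd (mk 0 1 0 0 0)
  · simpa using hdvd (mk 1 0 0 0 0)
  · simpa using hdvd (mk 0 0 0 1 0)
  · simpa using hdvd (mk 0 0 1 0 0)

lemma swA_good (a b c d : ℤ) (n : N) (hdvd : ∀ x, m ∣ Bl BN (mk a b c d n) x) :
    Good BN m (mk a b c d n) (mk d c b a n) := by
  obtain ⟨ha, hb, hc, hd⟩ := dvd_coords BN m hdvd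
  simp only [mk_10, mk_11, mk_20, mk_21] at ha hb hc hd
  refine ⟨⟨swapA, fun x y => ?_, ?_⟩, ?_⟩
  · rw [Bl_apply, Bl_apply]; show _ * _ + _ + _ + _ + BN _ _ = _; simp [swapA]; ring
  · refine ext5 ?_ ?_ ?_ ?_ ?_ <;> simp [swapA, mk]
  · refine ⟨mk ((d - a) / m) ((c - b) / m) ((b - c) / m) ((a - d) / m) 0, ?_⟩
    refine ext5 ?_ ?_ ?_ ?_ ?_ <;> simp [zsmul_zero]
    · exact (Int.mul_ediv_cancel' (dvd_sub hd ha)).symm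
    · exact (Int.mul_ediv_cancel' (dvd_sub hc hb)).symm
    · exact (Int.mul_ediv_cancel' (dvd_sub hb hc)).symm
    · exact (Int.mul_ediv_cancel' (dvd_sub ha hd)).symm

lemma sw2_good (a b c d : ℤ) (n : N) (hdvd : ∀ x, m ∣ Bl BN (mk a b c d n) x) :
    Good BN m (mk a b c d n) (mk a b d c n) := by
  obtain ⟨ha, hb, hc, hd⟩ := dvd_coords BN m hdvd
  simp only [mk_10, mk_11, mk_20, mk_21] at ha hb hc hd
  refine ⟨⟨swap2, fun x y => ?_, ?_⟩, ?_⟩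
  · rw [Bl_apply, Bl_apply]; show _ * _ + _ + _ + _ + BN _ _ = _; simp [swap2]; ring
  · refine ext5 ?_ ?_ ?_ ?_ ?_ <;> simp [swap2, mk]
  · refine ⟨mk 0 0 ((d - c) / m) ((c - d) / m) 0, ?_⟩
    refine ext5 ?_ ?_ ?_ ?_ ?_ <;> simp [zsmul_zero]
    · exact (Int.mul_ediv_cancel' (dvd_sub hd hc)).symm
    · exact (Int.mul_ediv_cancel' (dvd_sub hc hd)).symm

lemma swP_good (a b c d : ℤ) (n : N) (hdvd : ∀ x, m ∣ Bl BN (mk a b c d n) x) :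
    Good BN m (mk a b c d n) (mk c d a b n) := by
  obtain ⟨ha, hb, hc, hd⟩ := dvd_coords BN m hdvd
  simp only [mk_10, mk_11, mk_20, mk_21] at ha hb hc hd
  refine ⟨⟨swapP, fun x y => ?_, ?_⟩, ?_⟩
  · rw [Bl_apply, Bl_apply]; show _ * _ + _ + _ + _ + BN _ _ = _; simp [swapP]; ring
  · refine ext5 ?_ ?_ ?_ ?_ ?_ <;> simp [swapP, mk]
  · refine ⟨mk ((c - a) / m) ((d - b) / m) ((a - c) / m) ((b - d) / m) 0, ?_⟩
    refine ext5 ?_ ?_ ?_ ?_ ?_ <;> simp [zsmul_zero]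
    · exact (Int.mul_ediv_cancel' (dvd_sub hc ha)).symm
    · exact (Int.mul_ediv_cancel' (dvd_sub hd hb)).symm
    · exact (Int.mul_ediv_cancel' (dvd_sub ha hc)).symm
    · exact (Int.mul_ediv_cancel' (dvd_sub hb hd)).symm

/-- Transvection `t(e₂, α e₁)`. -/
lemma mvA_good (hsymm : ∀ x y : N, BN x y = BN y x) (a b c d α : ℤ) (n : N) (hdvd : ∀ x, m ∣ Bl BN (mk a b c d n) x) :
    Good BN m (mk a b c d n) (mk (a + d * α) b (c - α * b) d n) := by
  have h := good_tv BN m (mk 0 0 1 0 0) (mk α 0 0 0 0) (mk a b c d n) 0 hsymm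
    (by simp) (by simp) (by simp) (by simp) (hdvd _) (hdvd _)
  refine h.congr' BN ?_
  refine ext5 ?_ ?_ ?_ ?_ ?_ <;> simp [zsmul_zero] <;> ring

/-- Transvection `t(e₂, α e₁ + β f₁)` on a vector with `d = 0`: changes only `c`. -/
lemma mvC_good (hsymm : ∀ x y : N, BN x y = BN y x) (a b c α β : ℤ) (n : N) (hdvd : ∀ x, m ∣ Bl BN (mk a b c 0 n) x) :
    Good BN m (mk a b c 0 n) (mk a b (c - (α * b + β * a)) 0 n) := by
  have h := good_tv BN m (mk 0 0 1 0 0) (mk α β 0 0 0) (mk a b c 0 n) (α * β) hsymm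
    (by simp) (by simp) (by simp) (by simp; ring) (hdvd _) (hdvd _)
  refine h.congr' BN ?_
  refine ext5 ?_ ?_ ?_ ?_ ?_ <;> simp [zsmul_zero] <;> ring

/-- Transvection `t(e₁, a')`, `a' = (0,0,γ,δ,ν)`, on a vector with zero `U₁`-part. -/
lemma mvW_good (hsymm : ∀ x y : N, BN x y = BN y x) (c d γ δ kv : ℤ) (n v : N) (hkv : BN v v = 2 * kv)
    (hdvd : ∀ x, m ∣ Bl BN (mk 0 0 c d n) x) :
    Good BN m (mk 0 0 c d n) (mk (-(γ * d + δ * c + BN v n)) 0 c d n) := by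
  have h := good_tv BN m (mk 1 0 0 0 0) (mk 0 0 γ δ v) (mk 0 0 c d n) (γ * δ + kv) hsymm
    (by simp) (by simp) (by simp) (by simp [hkv]; ring) (hdvd _) (hdvd _)
  refine h.congr' BN ?_
  refine ext5 ?_ ?_ ?_ ?_ ?_ <;> simp [zsmul_zero] <;> ring

/-- Transvection `t(f₁, a')`, `a' = (0,0,γ,δ,ν)`. -/
lemma mvF_good (hsymm : ∀ x y : N, BN x y = BN y x) (a b c d γ δ kv : ℤ) (n v : N) (hkv : BN v v = 2 * kv)
    (hdvd : ∀ x, m ∣ Bl BN (mk a b c d n) x) :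
    Good BN m (mk a b c d n)
      (mk a (b - (γ * d + δ * c + BN v n) - (γ * δ + kv) * a) (c + a * γ) (d + a * δ)
        (n + a • v)) := by
  have h := good_tv BN m (mk 0 1 0 0 0) (mk 0 0 γ δ v) (mk a b c d n) (γ * δ + kv) hsymm
    (by simp) (by simp) (by simp) (by simp [hkv]; ring) (hdvd _) (hdvd _)
  refine h.congr' BN ?_
  refine ext5 ?_ ?_ ?_ ?_ ?_ <;> simp [zsmul_zero] <;> ring

end Moves

/-! ### Reduction algorithm -/

lemma euc (m : ℤ) (hsymm : ∀ x y : N, BN x y = BN y x) :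
    ∀ K : ℕ, ∀ a b c d : ℤ, ∀ n : N, d.natAbs = K →
    (∀ x, m ∣ Bl BN (mk a b c d n) x) →
    ∃ a' b' c', (a' ∣ a ∧ a' ∣ d ∧ ∃ p q, a' = a * p + d * q) ∧
      Good BN m (mk a b c d n) (mk a' b' c' 0 n) := by
  intro K
  induction K using Nat.strong_induction_on with
  | _ K IH =>
  intro a b c d n hK hdvd
  by_cases hd : d = 0
  · subst hd
    exact ⟨a, b, c, ⟨dvd_rfl, dvd_zero a, 1, 0, by ring⟩, Good.refl' BN m _⟩
  · have hdn : (0:ℤ) < (d.natAbs : ℤ) := by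
      exact_mod_cast Int.natAbs_pos.mpr hd
    have hr0 : 0 ≤ a % (d.natAbs : ℤ) := Int.emod_nonneg a (ne_of_gt hdn)
    have hrlt : a % (d.natAbs : ℤ) < (d.natAbs : ℤ) := Int.emod_lt_of_pos a hdn
    set r := a % (d.natAbs : ℤ) with hrdef
    have hdvd_ra : d ∣ r - a := by
      refine Int.natAbs_dvd.mp ⟨-(a / (d.natAbs : ℤ)), ?_⟩
      rw [hrdef, Int.emod_def]; ring
    obtain ⟨α, hα⟩ := hdvd_ra
    have step1 := mvA_good BN m hsymm a b c d α n hdvd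
    rw [show a + d * α = r by linarith] at step1
    have hdvd1 := step1.hdvd BN hdvd
    have step2 := swA_good BN m r b (c - α * b) d n hdvd1
    have hdvd2 := step2.hdvd BN hdvd1
    have hrK : r.natAbs < K := by
      rw [← hK]
      have := Int.natAbs_lt_natAbs_of_nonneg_of_lt hr0 hrlt
      rwa [Int.natAbs_natCast] at this
    obtain ⟨a', b', c'2, ⟨hd1, hd2, p, q, hpq⟩, G3⟩ :=
      IH r.natAbs hrK d (c - α * b) b r n rfl hdvd2
    refine ⟨a', b', c'2, ⟨?_, hd1, ⟨q, p + α * q, ?_⟩⟩,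
      (step1.trans' BN step2).trans' BN G3⟩
    · have : a = r - d * α := by linarith
      rw [this]; exact dvd_sub hd2 (hd1.mul_right α)
    · rw [hpq, show r = a + d * α by linarith]; ring

lemma round (m : ℤ) (hsymm : ∀ x y : N, BN x y = BN y x) :
    ∀ G : ℕ, G ≠ 0 → ∀ a b c : ℤ, ∀ n : N,
    Int.gcd a b = G → (∀ x, m ∣ Bl BN (mk a b c 0 n) x) →
    ∃ x y, Good BN m (mk a b c 0 n) (mk x y 0 0 n) := by
  intro G
  induction G using Nat.strong_induction_on with
  | _ G IH =>
  intro hG a b c n hgcd hdvd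
  have hgz : (0:ℤ) < (G:ℤ) := by exact_mod_cast Nat.pos_of_ne_zero hG
  have hbez : (G:ℤ) = a * Int.gcdA a b + b * Int.gcdB a b := by
    rw [← hgcd]; exact Int.gcd_eq_gcd_ab a b
  set s := Int.gcdA a b
  set t := Int.gcdB a b
  set qq := c / (G:ℤ) with hq
  set r := c % (G:ℤ) with hr
  have hr0 : 0 ≤ r := Int.emod_nonneg c (ne_of_gt hgz)
  have hrlt : r < (G:ℤ) := Int.emod_lt_of_pos c hgz
  have hcr : c - (qq * t * b + qq * s * a) = r := by
    have h1 : r = c - (G:ℤ) * qq := by rw [hr, hq, Int.emod_def]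
    rw [h1, hbez]; ring
  have step1 := mvC_good BN m hsymm a b c (qq * t) (qq * s) n hdvd
  rw [hcr] at step1
  have hdvd1 := step1.hdvd BN hdvd
  by_cases hrz : r = 0
  · rw [hrz] at step1
    exact ⟨a, b, step1⟩
  · have step2 := sw2_good BN m a b r 0 n hdvd1
    have hdvd2 := step2.hdvd BN hdvd1
    obtain ⟨a', b', c', ⟨ha'a, ha'r, _⟩, G3⟩ :=
      euc BN m hsymm r.natAbs a b 0 r n rfl hdvd2
    have hdvd3 := G3.hdvd BN hdvd2
    have ha'0 : a' ≠ 0 := fun h => hrz (by simpa [h] using ha'r)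
    have hG2 : Int.gcd a' b' ≠ 0 := fun h => ha'0 (Int.gcd_eq_zero_iff.mp h).1
    have hlt : Int.gcd a' b' < G := by
      have h1 : (Int.gcd a' b' : ℤ) ∣ r := dvd_trans (Int.gcd_dvd_left _ _) ha'r
      have h2 : (Int.gcd a' b' : ℤ) ≤ r :=
        Int.le_of_dvd (lt_of_le_of_ne hr0 (Ne.symm hrz)) h1
      exact_mod_cast lt_of_le_of_lt h2 hrlt
    obtain ⟨x, y, G4⟩ := IH _ hlt hG2 a' b' c' n rfl hdvd3
    exact ⟨x, y, ((step1.trans' BN step2).trans' BN G3).trans' BN G4⟩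

lemma canon (m : ℤ) (hsymm : ∀ x y : N, BN x y = BN y x)
    (heven : ∀ x : N, 2 ∣ BN x x) (u : TT N)
    (hdvd : ∀ x, m ∣ Bl BN u x) (hwit : ∃ x, Bl BN u x = m) :
    ∃ b' n', Good BN m u (mk m b' 0 0 n') := by
  obtain ⟨a, b, c, d, n, rfl⟩ : ∃ a b c d n, u = mk a b c d n := ⟨_, _, _, _, _, eta u⟩
  obtain ⟨a₁, b₁, c₁, -, G1⟩ := euc BN m hsymm d.natAbs a b c d n rfl hdvd
  have hdvd1 := G1.hdvd BN hdvd
  have key : ∃ X Y, Good BN m (mk a b c d n) (mk 0 0 X Y n) := by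
    by_cases hg : Int.gcd a₁ b₁ = 0
    · obtain ⟨ha0, hb0⟩ := Int.gcd_eq_zero_iff.mp hg
      rw [ha0, hb0] at G1
      exact ⟨c₁, 0, G1⟩
    · obtain ⟨x, y, G2⟩ := round BN m hsymm (Int.gcd a₁ b₁) hg a₁ b₁ c₁ n rfl hdvd1
      have hdvd2 := (G1.trans' BN G2).hdvd BN hdvd
      have G3 := swP_good BN m x y 0 0 n hdvd2
      exact ⟨x, y, (G1.trans' BN G2).trans' BN G3⟩
  obtain ⟨X, Y, G⟩ := key
  have hdvdS := G.hdvd BN hdvd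
  have hwitS := G.witness BN hwit
  obtain ⟨x₀, hx₀⟩ := hwitS
  have hx₀' : X * x₀.2.1 1 + Y * x₀.2.1 0 + BN n x₀.2.2 = m := by
    rw [Bl_apply] at hx₀; simpa using hx₀
  obtain ⟨kv, hkv⟩ := heven x₀.2.2
  have hkv' : BN (-x₀.2.2) (-x₀.2.2) = 2 * kv := by
    rw [map_neg BN, LinearMap.neg_apply, map_neg, neg_neg]; exact hkv
  have step4 := mvW_good BN m hsymm X Y (-(x₀.2.1 0)) (-(x₀.2.1 1)) kv n (-x₀.2.2)
    hkv' hdvdS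
  have e4 : -(-(x₀.2.1 0) * Y + -(x₀.2.1 1) * X + BN (-x₀.2.2) n) = m := by
    have hsn : BN (-x₀.2.2) n = -(BN n x₀.2.2) := by
      rw [map_neg BN, LinearMap.neg_apply, hsymm]
    rw [hsn]; linarith [hx₀']
  rw [e4] at step4
  have hdvd4 := step4.hdvd BN hdvdS
  have hmX : m ∣ X := by simpa using hdvd4 (mk 0 0 0 1 0)
  have hmY : m ∣ Y := by simpa using hdvd4 (mk 0 0 1 0 0)
  have step5 := mvF_good BN m hsymm m 0 X Y (-(X / m)) (-(Y / m)) 0 n 0 (by simp) hdvd4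
  refine ⟨X / m * Y + Y / m * X - X / m * (Y / m) * m, n,
    (G.trans' BN step4).trans' BN (step5.congr' BN ?_)⟩
  refine ext5 ?_ ?_ ?_ ?_ ?_
  · simp
  · simp; ring
  · simp only [mk_20]
    rw [mul_neg, Int.mul_ediv_cancel' hmX]; ring
  · simp only [mk_21]
    rw [mul_neg, Int.mul_ediv_cancel' hmY]; ring
  · simp [zsmul_zero]

end S16

open S16 in
/-- Eichler criterion: in `T = U ⊕ U ⊕ N` with `N` an even
lattice, two primitive vectors with the same square, the same divisor `m`, and
the same discriminant class (i.e. `v - w ∈ mT`) are related by an isometry. -/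
theorem stmt_16 (N : Type) [AddCommGroup N] [Module ℤ N]
    [Module.Free ℤ N] [Module.Finite ℤ N]
    (BN : N →ₗ[ℤ] N →ₗ[ℤ] ℤ)
    (hsymm : ∀ x y : N, BN x y = BN y x)
    (heven : ∀ x : N, 2 ∣ BN x x)
    (hnondeg : ∀ x : N, (∀ y : N, BN x y = 0) → x = 0)
    (B : (Fin 2 → ℤ) × (Fin 2 → ℤ) × N → (Fin 2 → ℤ) × (Fin 2 → ℤ) × N → ℤ)
    (hB : ∀ p q, B p q =
      p.1 0 * q.1 1 + p.1 1 * q.1 0 +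
      p.2.1 0 * q.2.1 1 + p.2.1 1 * q.2.1 0 + BN p.2.2 q.2.2)
    (v w : (Fin 2 → ℤ) × (Fin 2 → ℤ) × N)
    (hvprim : ∀ (k : ℤ) x, v = k • x → IsUnit k)
    (hwprim : ∀ (k : ℤ) x, w = k • x → IsUnit k)
    (hsq : B v v = B w w)
    (m : ℤ) (hm : 0 < m)
    (hdv : Ideal.span (Set.range fun x => B v x) = Ideal.span {m})
    (hdw : Ideal.span (Set.range fun x => B w x) = Ideal.span {m})
    (hdisc : ∃ t : (Fin 2 → ℤ) × (Fin 2 → ℤ) × N, v - w = m • t) :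
    ∃ g : ((Fin 2 → ℤ) × (Fin 2 → ℤ) × N) ≃ₗ[ℤ]
        ((Fin 2 → ℤ) × (Fin 2 → ℤ) × N),
      (∀ x y, B (g x) (g y) = B x y) ∧ g v = w := by
  have hBl : ∀ p q, B p q = Bl BN p q := fun p q => (hB p q).trans (Bl_apply BN p q).symm
  have hdvd_v : ∀ x, m ∣ Bl BN v x := by
    intro x
    have hx : B v x ∈ Ideal.span {m} := by
      rw [← hdv]; exact Ideal.subset_span ⟨x, rfl⟩
    rw [← hBl]; exact Ideal.mem_span_singleton.mp hx
  have hdvd_w : ∀ x, m ∣ Bl BN w x := by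
    intro x
    have hx : B w x ∈ Ideal.span {m} := by
      rw [← hdw]; exact Ideal.subset_span ⟨x, rfl⟩
    rw [← hBl]; exact Ideal.mem_span_singleton.mp hx
  have hrange : ∀ u : TT N, (Set.range fun x => B u x) = ↑(LinearMap.range (Bl BN u)) := by
    intro u; ext z; simp [hBl]
  have hwit_v : ∃ x, Bl BN v x = m := by
    have hm' : m ∈ Ideal.span (Set.range fun x => B v x) := by
      rw [hdv]; exact Ideal.mem_span_singleton_self m
    rw [hrange v, Ideal.span_eq] at hm'
    exact hm'
  have hwit_w : ∃ x, Bl BN w x = m := by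
    have hm' : m ∈ Ideal.span (Set.range fun x => B w x) := by
      rw [hdw]; exact Ideal.mem_span_singleton_self m
    rw [hrange w, Ideal.span_eq] at hm'
    exact hm'
  obtain ⟨bv, nv, Gv⟩ := canon BN m hsymm heven v hdvd_v hwit_v
  obtain ⟨bw, nw, Gw⟩ := canon BN m hsymm heven w hdvd_w hwit_w
  obtain ⟨t, ht⟩ := hdisc
  obtain ⟨tv', htv⟩ := Gv.2
  obtain ⟨tw', htw⟩ := Gw.2
  have hdiff : (mk m bw 0 0 nw : TT N) - mk m bv 0 0 nv = m • (tw' - t - tv') := by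
    have e : (mk m bw 0 0 nw : TT N) - mk m bv 0 0 nv =
        (mk m bw 0 0 nw - w) + (-(v - w)) + (-(mk m bv 0 0 nv - v)) := by abel
    rw [e, htw, ht, htv]; module
  have hn : nw - nv = m • (tw' - t - tv').2.2 := by
    have := congrArg (fun z : TT N => z.2.2) hdiff
    simpa using this
  obtain ⟨kv, hkv⟩ := heven (tw' - t - tv').2.2
  have hdvd_vc := Gv.hdvd BN hdvd_v
  have step := mvF_good BN m hsymm m bv 0 0 0 0 kv nv (tw' - t - tv').2.2 hkv hdvd_vc
  have hnw : nv + m • (tw' - t - tv').2.2 = nw := by rw [← hn]; abel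
  have step' := step.congr' BN (u'' := mk m (bv - BN (tw' - t - tv').2.2 nv - kv * m) 0 0 nw)
    (ext5 (by simp) (by simp) (by simp) (by simp) (by simpa using hnw))
  have hsq' : Bl BN v v = Bl BN w w := by rw [← hBl, ← hBl]; exact hsq
  have h1 := (Gv.trans' BN step').sq BN
  have h2 := Gw.sq BN
  have hb2 : bv - BN (tw' - t - tv').2.2 nv - kv * m = bw := by
    have e1 : Bl BN (mk m (bv - BN (tw' - t - tv').2.2 nv - kv * m) 0 0 nw)
        (mk m (bv - BN (tw' - t - tv').2.2 nv - kv * m) 0 0 nw) =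
        2 * m * (bv - BN (tw' - t - tv').2.2 nv - kv * m) + BN nw nw := by
      rw [Bl_mk]; ring
    have e2 : Bl BN (mk m bw 0 0 nw : TT N) (mk m bw 0 0 nw) = 2 * m * bw + BN nw nw := by
      rw [Bl_mk]; ring
    rw [e1, hsq'] at h1
    rw [e2] at h2
    have : 2 * m * (bv - BN (tw' - t - tv').2.2 nv - kv * m) = 2 * m * bw := by
      linarith
    exact mul_left_cancel₀ (by positivity) this
  rw [hb2] at step'
  have final := ((Gv.trans' BN step').trans' BN (Gw.symm' BN))
  obtain ⟨⟨g, hg, hgv⟩, -⟩ := final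
  exact ⟨g, fun x y => by rw [hBl, hBl, hg], hgv⟩
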